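/- Let k be a field, H a Hopf algebra over k, and R a universal R-matrix on H. Then the subspaces H_l and H_r of H are subalgebras: 1 ∈ H_l, 1 ∈ H_r, and for all x, y ∈ H_l one has x·y ∈ H_l, and likewise for H_r. -/

import Mathlib

open scoped TensorProduct

noncomputable section

variable (k H : Type*) [Field k] [Ring H] [HopfAlgebra k H]

/-- The comultiplication as an algebra map. -/
abbrev Δ : H →ₐ[k] H ⊗[k] H := Bialgebra.comulAlgHom k H

/-- The flip `x ⊗ y ↦ y ⊗ x` of the tensor square, as an algebra map. -/
abbrev τ : H ⊗[k] H →ₐ[k] H ⊗[k] H := (Algebra.TensorProduct.comm k H H).toAlgHom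

/-- `x ⊗ y ↦ x ⊗ y ⊗ 1`. -/
abbrev ι₁₂ : H ⊗[k] H →ₐ[k] H ⊗[k] (H ⊗[k] H) :=
  Algebra.TensorProduct.map (AlgHom.id k H) Algebra.TensorProduct.includeLeft

/-- `x ⊗ y ↦ x ⊗ 1 ⊗ y`. -/
abbrev ι₁₃ : H ⊗[k] H →ₐ[k] H ⊗[k] (H ⊗[k] H) :=
  Algebra.TensorProduct.map (AlgHom.id k H) Algebra.TensorProduct.includeRight

/-- `x ⊗ y ↦ 1 ⊗ x ⊗ y`. -/
abbrev ι₂₃ : H ⊗[k] H →ₐ[k] H ⊗[k] (H ⊗[k] H) :=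
  Algebra.TensorProduct.includeRight

/-- `id ⊗ Δ`. -/
abbrev idΔ : H ⊗[k] H →ₐ[k] H ⊗[k] (H ⊗[k] H) :=
  Algebra.TensorProduct.map (AlgHom.id k H) (Bialgebra.comulAlgHom k H)

/-- `Δ ⊗ id` (re-associated to land in `H ⊗ (H ⊗ H)`). -/
abbrev Δid : H ⊗[k] H →ₐ[k] H ⊗[k] (H ⊗[k] H) :=
  (Algebra.TensorProduct.assoc k k k H H H).toAlgHom.comp
    (Algebra.TensorProduct.map (Bialgebra.comulAlgHom k H) (AlgHom.id k H))

/-- `R` is a universal R-matrix (quasitriangular structure) on `H`. -/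
def IsUnivRMatrix (R : H ⊗[k] H) : Prop :=
  IsUnit R ∧
  (∀ h : H, R * τ k H (Δ k H h) = Δ k H h * R) ∧
  idΔ k H R = ι₁₃ k H R * ι₁₂ k H R ∧
  Δid k H R = ι₁₃ k H R * ι₂₃ k H R

/-- `ε ⊗ id : H ⊗ H → H`, `x ⊗ y ↦ ε(x)·y`. -/
abbrev εid : H ⊗[k] H →ₐ[k] H :=
  (Algebra.TensorProduct.lid k H).toAlgHom.comp
    (Algebra.TensorProduct.map (Bialgebra.counitAlgHom k H) (AlgHom.id k H))

/-- `id ⊗ ε : H ⊗ H → H`, `x ⊗ y ↦ ε(y)·x`. -/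
abbrev idε : H ⊗[k] H →ₐ[k] H :=
  ((Algebra.TensorProduct.rid k k H).toAlgHom.restrictScalars k).comp
    (Algebra.TensorProduct.map (AlgHom.id k H) (Bialgebra.counitAlgHom k H))

/-- `S ⊗ id : H ⊗ H → H ⊗ H`. -/
abbrev Sid : H ⊗[k] H →ₗ[k] H ⊗[k] H :=
  LinearMap.rTensor H (HopfAlgebra.antipode (R := k))

/-- `S ⊗ S : H ⊗ H → H ⊗ H`. -/
abbrev SS : H ⊗[k] H →ₗ[k] H ⊗[k] H :=
  TensorProduct.map (HopfAlgebra.antipode (R := k)) (HopfAlgebra.antipode (R := k))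

/-- The Markov element `u = μ((S ⊗ id)(τ(R)))` of a bivector `R`. -/
def markov (R : H ⊗[k] H) : H :=
  LinearMap.mul' k H (Sid k H ((TensorProduct.comm k H H) R))

/-- `(id ⊗ l)(R)` : applying a linear functional to the second tensor factor. -/
def evR (l : H →ₗ[k] k) : H ⊗[k] H →ₗ[k] H :=
  (TensorProduct.rid k H).toLinearMap ∘ₗ LinearMap.lTensor H l

/-- `(l ⊗ id)(R)` : applying a linear functional to the first tensor factor. -/
def evL (l : H →ₗ[k] k) : H ⊗[k] H →ₗ[k] H :=
  (TensorProduct.lid k H).toLinearMap ∘ₗ LinearMap.rTensor H l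

/-- The subspace `H_l = {(id ⊗ l)(R) : l ∈ H*}`. -/
def Hl (R : H ⊗[k] H) : Set H := Set.range fun l : H →ₗ[k] k => evR k H l R

/-- The subspace `H_r = {(l ⊗ id)(R) : l ∈ H*}`. -/
def Hr (R : H ⊗[k] H) : Set H := Set.range fun l : H →ₗ[k] k => evL k H l R

/-- `H` is cocommutative: `τ ∘ Δ = Δ`. -/
def IsCocomm : Prop :=
  ∀ x : H, (TensorProduct.comm k H H) (Coalgebra.comul (R := k) x) = Coalgebra.comul x

/-- The adjoint action `x ↦ x^h = Σ h₍₁₎ · x · S(h₍₂₎)` of `h`, as an endomorphism of `H`. -/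
def adEnd (h : H) : H →ₗ[k] H :=
  TensorProduct.lift
    (LinearMap.mk₂ k
      (fun a b => LinearMap.mulRight k (HopfAlgebra.antipode (R := k) b) ∘ₗ
        LinearMap.mulLeft k a)
      (fun a a' b => by ext x; simp [add_mul])
      (fun c a b => by ext x; simp [smul_mul_assoc])
      (fun a b b' => by ext x; simp [mul_add])
      (fun c a b => by ext x; simp [mul_smul_comm]))
    (Coalgebra.comul h)



section Aux

variable {k H : Type*} [Field k] [Ring H] [HopfAlgebra k H]

lemma εid_tmul (a b : H) : εid k H (a ⊗ₜ[k] b) = Coalgebra.counit (R := k) a • b := by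
  simp [Algebra.TensorProduct.lid_tmul]

lemma idε_tmul (a b : H) : idε k H (a ⊗ₜ[k] b) = Coalgebra.counit (R := k) b • a := by
  simp [Algebra.TensorProduct.rid_tmul]

lemma εid_eq (z : H ⊗[k] H) :
    εid k H z = TensorProduct.lid k H
      (LinearMap.rTensor H (Coalgebra.counit (R := k) (A := H)) z) := by
  induction z using TensorProduct.induction_on with
  | zero => simp
  | tmul a b => simp [εid_tmul]
  | add x y hx hy => simp [map_add, hx, hy]

lemma idε_eq (z : H ⊗[k] H) :
    idε k H z = TensorProduct.rid k H
      (LinearMap.lTensor H (Coalgebra.counit (R := k) (A := H)) z) := by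
  induction z using TensorProduct.induction_on with
  | zero => simp
  | tmul a b => simp [idε_tmul]
  | add x y hx hy => simp [map_add, hx, hy]

lemma εid_comul (a : H) : εid k H (Coalgebra.comul (R := k) a) = a := by
  rw [εid_eq, Coalgebra.rTensor_counit_comul]; simp

lemma idε_comul (a : H) : idε k H (Coalgebra.comul (R := k) a) = a := by
  rw [idε_eq, Coalgebra.lTensor_counit_comul]; simp

lemma evR_tmul (l : H →ₗ[k] k) (a b : H) : evR k H l (a ⊗ₜ[k] b) = l b • a := by
  simp [evR]

lemma evL_tmul (l : H →ₗ[k] k) (a b : H) : evL k H l (a ⊗ₜ[k] b) = l a • b := by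
  simp [evL]

lemma evR_counit (z : H ⊗[k] H) :
    evR k H (Coalgebra.counit (R := k)) z = idε k H z := by
  induction z using TensorProduct.induction_on with
  | zero => simp
  | tmul a b => simp [evR_tmul, idε_tmul]
  | add x y hx hy => simp [map_add, hx, hy]

lemma evL_counit (z : H ⊗[k] H) :
    evL k H (Coalgebra.counit (R := k)) z = εid k H z := by
  induction z using TensorProduct.induction_on with
  | zero => simp
  | tmul a b => simp [evL_tmul, εid_tmul]
  | add x y hx hy => simp [map_add, hx, hy]

/-- The "delete the middle tensor factor" algebra map. -/
abbrev Pmid (k H : Type*) [Field k] [Ring H] [HopfAlgebra k H] :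
    H ⊗[k] (H ⊗[k] H) →ₐ[k] H ⊗[k] H :=
  Algebra.TensorProduct.map (AlgHom.id k H) (εid k H)

lemma Pmid_idΔ (z : H ⊗[k] H) : Pmid k H (idΔ k H z) = z := by
  induction z using TensorProduct.induction_on with
  | zero => simp
  | tmul a b =>
      simp only [Algebra.TensorProduct.map_tmul, AlgHom.coe_id, id_eq,
        Bialgebra.comulAlgHom_apply]
      rw [εid_comul]
  | add x y hx hy => simp [map_add, hx, hy]

lemma Pmid_ι₁₃ (z : H ⊗[k] H) : Pmid k H (ι₁₃ k H z) = z := by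
  induction z using TensorProduct.induction_on with
  | zero => simp
  | tmul a b => simp [εid_tmul]
  | add x y hx hy => simp [map_add, hx, hy]

lemma Pmid_ι₁₂ (z : H ⊗[k] H) : Pmid k H (ι₁₂ k H z) = (idε k H z) ⊗ₜ[k] 1 := by
  induction z using TensorProduct.induction_on with
  | zero => simp
  | tmul a b => simp [εid_tmul, idε_tmul, TensorProduct.smul_tmul']
  | add x y hx hy => simp [map_add, hx, hy, TensorProduct.add_tmul]

lemma Pmid_ι₂₃ (z : H ⊗[k] H) : Pmid k H (ι₂₃ k H z) = (1 : H) ⊗ₜ[k] (εid k H z) := by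
  induction z using TensorProduct.induction_on with
  | zero => simp
  | tmul a b => simp [εid_tmul]
  | add x y hx hy => simp [map_add, hx, hy, TensorProduct.tmul_add]

lemma Pmid_assoc (w : H ⊗[k] H) (b : H) :
    Pmid k H ((Algebra.TensorProduct.assoc k k k H H H) (w ⊗ₜ[k] b)) =
      (idε k H w) ⊗ₜ[k] b := by
  induction w using TensorProduct.induction_on with
  | zero => simp
  | tmul a c => simp [εid_tmul, idε_tmul, TensorProduct.smul_tmul']
  | add x y hx hy =>
      simp [TensorProduct.add_tmul, map_add, hx, hy]

lemma Pmid_Δid (z : H ⊗[k] H) : Pmid k H (Δid k H z) = z := by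
  induction z using TensorProduct.induction_on with
  | zero => simp
  | tmul a b =>
      have : Δid k H (a ⊗ₜ[k] b) =
          (Algebra.TensorProduct.assoc k k k H H H) ((Coalgebra.comul (R := k) a) ⊗ₜ[k] b) := by
        simp
      rw [this, Pmid_assoc, idε_comul]
  | add x y hx hy => rw [map_add, map_add, hx, hy]

/-- The functional `x ⊗ y ↦ m(x)·l(y)` on `H ⊗ H`. -/
def glin (l m : H →ₗ[k] k) : H ⊗[k] H →ₗ[k] k :=
  (TensorProduct.lid k k).toLinearMap ∘ₗ TensorProduct.map m l

lemma glin_tmul (l m : H →ₗ[k] k) (x y : H) : glin l m (x ⊗ₜ[k] y) = m x * l y := by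
  simp [glin, smul_eq_mul]

/-- Apply `glin l m` to the second factor of `H ⊗ (H ⊗ H)`. -/
def Fmap (l m : H →ₗ[k] k) : H ⊗[k] (H ⊗[k] H) →ₗ[k] H :=
  (TensorProduct.rid k H).toLinearMap ∘ₗ LinearMap.lTensor H (glin l m)

lemma Fmap_tmul (l m : H →ₗ[k] k) (a : H) (w : H ⊗[k] H) :
    Fmap l m (a ⊗ₜ[k] w) = glin l m w • a := by
  simp [Fmap]

/-- Apply `l` to the first factor and `evL m` to the second. -/
def Gmap (l m : H →ₗ[k] k) : H ⊗[k] (H ⊗[k] H) →ₗ[k] H :=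
  (TensorProduct.lid k H).toLinearMap ∘ₗ TensorProduct.map l (evL k H m)

lemma Gmap_tmul (l m : H →ₗ[k] k) (a : H) (w : H ⊗[k] H) :
    Gmap l m (a ⊗ₜ[k] w) = l a • evL k H m w := by
  simp [Gmap]

lemma Fmap_idΔ (l m : H →ₗ[k] k) (z : H ⊗[k] H) :
    Fmap l m (idΔ k H z) = evR k H ((glin l m) ∘ₗ Coalgebra.comul (R := k)) z := by
  induction z using TensorProduct.induction_on with
  | zero => simp
  | tmul a b => simp [Fmap_tmul, evR_tmul]
  | add x y hx hy => simp [map_add, hx, hy]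

lemma Fmap_mul (l m : H →ₗ[k] k) (z w : H ⊗[k] H) :
    Fmap l m (ι₁₃ k H z * ι₁₂ k H w) = evR k H l z * evR k H m w := by
  induction z using TensorProduct.induction_on with
  | zero => simp
  | add x y hx hy => rw [map_add, add_mul, map_add, hx, hy, map_add, add_mul]
  | tmul a b =>
      induction w using TensorProduct.induction_on with
      | zero => simp
      | add x y hx hy => rw [map_add, mul_add, map_add, hx, hy, map_add, mul_add]
      | tmul c d =>
          simp only [Algebra.TensorProduct.map_tmul, AlgHom.coe_id, id_eq,
            Algebra.TensorProduct.includeRight_apply, Algebra.TensorProduct.includeLeft_apply,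
            Algebra.TensorProduct.tmul_mul_tmul, one_mul, mul_one,
            Fmap_tmul, glin_tmul, evR_tmul]
          rw [smul_mul_smul_comm]
          rw [mul_comm (l b) (m d)]

lemma Gmap_Δid (l m : H →ₗ[k] k) (z : H ⊗[k] H) :
    Gmap l m (Δid k H z) = evL k H ((glin m l) ∘ₗ Coalgebra.comul (R := k)) z := by
  have key : ∀ (w : H ⊗[k] H) (b : H),
      Gmap l m ((Algebra.TensorProduct.assoc k k k H H H) (w ⊗ₜ[k] b)) = glin m l w • b := by
    intro w b
    induction w using TensorProduct.induction_on with
    | zero => simp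
    | tmul x y => simp [Gmap_tmul, glin_tmul, evL_tmul, smul_smul]
    | add x y hx hy => simp [TensorProduct.add_tmul, map_add, hx, hy, add_smul]
  induction z using TensorProduct.induction_on with
  | zero => simp
  | tmul a b =>
      have : Δid k H (a ⊗ₜ[k] b) =
          (Algebra.TensorProduct.assoc k k k H H H) ((Coalgebra.comul (R := k) a) ⊗ₜ[k] b) := by
        simp
      rw [this, key, evL_tmul]; rfl
  | add x y hx hy => rw [map_add, map_add, hx, hy, map_add]

lemma Gmap_mul (l m : H →ₗ[k] k) (z w : H ⊗[k] H) :
    Gmap l m (ι₁₃ k H z * ι₂₃ k H w) = evL k H l z * evL k H m w := by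
  induction z using TensorProduct.induction_on with
  | zero => simp
  | add x y hx hy => rw [map_add, add_mul, map_add, hx, hy, map_add, add_mul]
  | tmul a b =>
      induction w using TensorProduct.induction_on with
      | zero => simp
      | add x y hx hy => rw [map_add, mul_add, map_add, hx, hy, map_add, mul_add]
      | tmul c d =>
          simp only [Algebra.TensorProduct.map_tmul, AlgHom.coe_id, id_eq,
            Algebra.TensorProduct.includeRight_apply,
            Algebra.TensorProduct.tmul_mul_tmul, one_mul, mul_one,
            Gmap_tmul, evL_tmul]
          rw [smul_mul_smul_comm, smul_smul]

end Aux

/-- For a universal R-matrix `R`, the subspaces `H_l` and `H_r` are subalgebras of `H`. -/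
theorem Hl_Hr_subalgebra {k H : Type*} [Field k] [Ring H] [HopfAlgebra k H]
    (R : H ⊗[k] H) (hR : IsUnivRMatrix k H R) :
    ((1 : H) ∈ Hl k H R ∧ ∀ x ∈ Hl k H R, ∀ y ∈ Hl k H R, x * y ∈ Hl k H R) ∧
    ((1 : H) ∈ Hr k H R ∧ ∀ x ∈ Hr k H R, ∀ y ∈ Hr k H R, x * y ∈ Hr k H R) := by
  obtain ⟨hunit, -, hex1, hex2⟩ := hR
  have hidε : idε k H R = 1 := by
    have e := congrArg (Pmid k H) hex1
    rw [Pmid_idΔ, map_mul, Pmid_ι₁₃, Pmid_ι₁₂] at e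
    have e2 : (idε k H R) ⊗ₜ[k] (1 : H) = (1 : H ⊗[k] H) :=
      hunit.mul_left_cancel (by rw [← e, mul_one])
    have e3 := congrArg (idε k H) e2
    rwa [idε_tmul, Bialgebra.counit_one, one_smul, map_one] at e3
  have hεid : εid k H R = 1 := by
    have e := congrArg (Pmid k H) hex2
    rw [Pmid_Δid, map_mul, Pmid_ι₁₃, Pmid_ι₂₃] at e
    have e2 : (1 : H) ⊗ₜ[k] (εid k H R) = (1 : H ⊗[k] H) :=
      hunit.mul_left_cancel (by rw [← e, mul_one])
    have e3 := congrArg (εid k H) e2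
    rwa [εid_tmul, Bialgebra.counit_one, one_smul, map_one] at e3
  refine ⟨⟨⟨Coalgebra.counit, by show evR k H (Coalgebra.counit (R := k)) R = 1; rw [evR_counit, hidε]⟩, ?_⟩,
    ⟨⟨Coalgebra.counit, by show evL k H (Coalgebra.counit (R := k)) R = 1; rw [evL_counit, hεid]⟩, ?_⟩⟩
  · rintro x ⟨l, rfl⟩ y ⟨m, rfl⟩
    exact ⟨(glin l m) ∘ₗ Coalgebra.comul (R := k), by
      show evR k H ((glin l m) ∘ₗ Coalgebra.comul (R := k)) R = _
      rw [← Fmap_idΔ, hex1, Fmap_mul]⟩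
  · rintro x ⟨l, rfl⟩ y ⟨m, rfl⟩
    exact ⟨(glin m l) ∘ₗ Coalgebra.comul (R := k), by
      show evL k H ((glin m l) ∘ₗ Coalgebra.comul (R := k)) R = _
      rw [← Gmap_Δid, hex2, Gmap_mul]⟩


end
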